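/- (Injectivity of the development correspondence.) Let a ∈ u(n) be a fixed diagonal matrix and let f, g : ℝ → U(n) be smooth maps such that f(x) a f(x)⁻¹ = g(x) a g(x)⁻¹ for all x, such that f⁻¹f_x(x) ∈ u(n)_a^⊥ and g⁻¹g_x(x) ∈ u(n)_a^⊥ for all x, and such that f(x) → I and g(x) → I as x → −∞. Then f = g. -/

import Mathlib

open Matrix Filter

attribute [local instance] Matrix.normedAddCommGroup Matrix.normedSpace

/-- The centralizer `u(n)_a = {y ∈ u(n) : [y,a] = 0}` of `a` in `u(n)`. -/
def uCent (n : ℕ) (a : Matrix (Fin n) (Fin n) ℂ) : Set (Matrix (Fin n) (Fin n) ℂ) :=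
  {y | yᴴ = -y ∧ y * a = a * y}

/-- The orthogonal complement `u(n)_a^⊥` of `u(n)_a` in `u(n)` with respect to the
inner product `⟨x,y⟩ = −tr(xy)`. -/
def uPerp (n : ℕ) (a : Matrix (Fin n) (Fin n) ℂ) : Set (Matrix (Fin n) (Fin n) ℂ) :=
  {y | yᴴ = -y ∧ ∀ z ∈ uCent n a, -(y * z).trace = 0}

variable {n : ℕ}

noncomputable def matMulCLM (n : ℕ) : Matrix (Fin n) (Fin n) ℂ →L[ℝ]
    Matrix (Fin n) (Fin n) ℂ →L[ℝ] Matrix (Fin n) (Fin n) ℂ :=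
  LinearMap.toContinuousLinearMap
    { toFun := fun x => LinearMap.toContinuousLinearMap (LinearMap.mulLeft ℝ x)
      map_add' := by intro x y; ext z; simp [add_mul]
      map_smul' := by intro r x; ext z; simp [smul_mul_assoc] }

lemma matMulCLM_apply (x y : Matrix (Fin n) (Fin n) ℂ) : matMulCLM n x y = x * y := rfl

lemma isBBM_mul : IsBoundedBilinearMap ℝ
    (fun p : Matrix (Fin n) (Fin n) ℂ × Matrix (Fin n) (Fin n) ℂ => p.1 * p.2) :=
  (matMulCLM n).isBoundedBilinearMap

lemma HasDerivAt.matmul {u v : ℝ → Matrix (Fin n) (Fin n) ℂ}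
    {u' v' : Matrix (Fin n) (Fin n) ℂ} {x : ℝ}
    (hu : HasDerivAt u u' x) (hv : HasDerivAt v v' x) :
    HasDerivAt (fun t => u t * v t) (u x * v' + u' * v x) x := by
  have h := (isBBM_mul (n := n)).hasFDerivAt (u x, v x)
  have := h.comp_hasDerivAt x (hu.prodMk hv)
  simp only [Function.comp_def] at this
  exact this

noncomputable def starCLM (n : ℕ) : Matrix (Fin n) (Fin n) ℂ →L[ℝ] Matrix (Fin n) (Fin n) ℂ :=
  LinearMap.toContinuousLinearMap
    { toFun := fun y => star y
      map_add' := by intro x y; simp [star_add]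
      map_smul' := by intro r y; simp [Matrix.star_eq_conjTranspose, Matrix.conjTranspose_smul] }

lemma HasDerivAt.matstar {u : ℝ → Matrix (Fin n) (Fin n) ℂ}
    {u' : Matrix (Fin n) (Fin n) ℂ} {x : ℝ} (hu : HasDerivAt u u' x) :
    HasDerivAt (fun t => star (u t)) (star u') x := by
  have h := (starCLM n).hasFDerivAt (x := u x)
  exact h.comp_hasDerivAt x hu

lemma eq_zero_of_trace_conjTranspose_mul_self {y : Matrix (Fin n) (Fin n) ℂ}
    (h : (yᴴ * y).trace = 0) : y = 0 := by
  have h2 : ∑ i, ∑ j, Complex.normSq (y j i) = 0 := by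
    have := congrArg Complex.re h
    simpa [Matrix.trace, Matrix.mul_apply, Matrix.diag, Matrix.conjTranspose_apply,
      Complex.normSq_eq_conj_mul_self, ← Complex.ofReal_sum, Complex.normSq_apply] using this
  ext i j
  have hnn : ∀ i ∈ (Finset.univ : Finset (Fin n)), 0 ≤ ∑ j, Complex.normSq (y j i) :=
    fun i _ => Finset.sum_nonneg fun j _ => Complex.normSq_nonneg _
  have h3 := (Finset.sum_eq_zero_iff_of_nonneg hnn).mp h2 j (Finset.mem_univ _)
  have h4 := (Finset.sum_eq_zero_iff_of_nonneg
    (fun k _ => Complex.normSq_nonneg (y k j))).mp h3 i (Finset.mem_univ _)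
  simpa using Complex.normSq_eq_zero.mp h4

lemma uCent_inter_uPerp_eq_zero {a y : Matrix (Fin n) (Fin n) ℂ}
    (hc : y ∈ uCent n a) (hp : y ∈ uPerp n a) : y = 0 := by
  have h := hp.2 y hc
  apply eq_zero_of_trace_conjTranspose_mul_self (y := y)
  have hy : yᴴ = -y := hp.1
  rw [hy, Matrix.neg_mul, Matrix.trace_neg]
  simpa using h


set_option maxHeartbeats 1000000 in
/-- Injectivity of the development correspondence: if `a ∈ u(n)` is diagonal,
`f, g : ℝ → U(n)` are smooth with `f a f⁻¹ = g a g⁻¹`, `f⁻¹f_x` and `g⁻¹g_x` taking values in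
`u(n)_a^⊥`, and `f, g → I` as `x → −∞`, then `f = g`. -/
theorem stmt5 (n : ℕ)
    (a : Matrix (Fin n) (Fin n) ℂ) (haDiag : a.IsDiag) (haSkew : aᴴ = -a)
    (f g : ℝ → Matrix (Fin n) (Fin n) ℂ)
    (hf : ContDiff ℝ (⊤ : ℕ∞) f) (hg : ContDiff ℝ (⊤ : ℕ∞) g)
    (hfU : ∀ x, f x ∈ Matrix.unitaryGroup (Fin n) ℂ)
    (hgU : ∀ x, g x ∈ Matrix.unitaryGroup (Fin n) ℂ)
    (horbit : ∀ x, f x * a * star (f x) = g x * a * star (g x))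
    (hfperp : ∀ x, star (f x) * deriv f x ∈ uPerp n a)
    (hgperp : ∀ x, star (g x) * deriv g x ∈ uPerp n a)
    (hflim : Tendsto f atBot (nhds 1))
    (hglim : Tendsto g atBot (nhds 1)) :
    f = g := by
  classical
  have hfd : ∀ x, HasDerivAt f (deriv f x) x :=
    fun x => ((hf.differentiable (by simp)) x).hasDerivAt
  have hgd : ∀ x, HasDerivAt g (deriv g x) x :=
    fun x => ((hg.differentiable (by simp)) x).hasDerivAt
  have sFF : ∀ x, star (f x) * f x = 1 := fun x => Matrix.mem_unitaryGroup_iff'.mp (hfU x)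
  have FsF : ∀ x, f x * star (f x) = 1 := fun x => Matrix.mem_unitaryGroup_iff.mp (hfU x)
  have sGG : ∀ x, star (g x) * g x = 1 := fun x => Matrix.mem_unitaryGroup_iff'.mp (hgU x)
  have GsG : ∀ x, g x * star (g x) = 1 := fun x => Matrix.mem_unitaryGroup_iff.mp (hgU x)
  set h : ℝ → Matrix (Fin n) (Fin n) ℂ := fun t => star (g t) * f t with hhdef
  set D : ℝ → Matrix (Fin n) (Fin n) ℂ :=
    fun x => star (g x) * deriv f x + star (deriv g x) * f x with hDdef
  have hHd : ∀ x, HasDerivAt h (D x) x :=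
    fun x => ((hgd x).matstar).matmul (hfd x)
  -- h is unitary:
  have sHH : ∀ x, star (h x) * h x = 1 := by
    intro x
    simp only [hhdef, StarMul.star_mul, star_star]
    calc star (f x) * g x * (star (g x) * f x)
        = star (f x) * (g x * star (g x) * f x) := by simp only [mul_assoc]
      _ = 1 := by rw [GsG x, one_mul, sFF x]
  have HsH : ∀ x, h x * star (h x) = 1 := by
    intro x
    simp only [hhdef, StarMul.star_mul, star_star]
    calc star (g x) * f x * (star (f x) * g x)
        = star (g x) * (f x * star (f x) * g x) := by simp only [mul_assoc]
      _ = 1 := by rw [FsF x, one_mul, sGG x]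
  -- h commutes with a:
  have hcomm : ∀ x, h x * a = a * h x := by
    intro x
    have key := congrArg (fun m => star (g x) * m * f x) (horbit x)
    have l1 : ∀ m, star (g x) * (g x * m) = m := fun m => by
      rw [← mul_assoc, sGG x, one_mul]
    simp only [mul_assoc, sFF x, mul_one, l1] at key
    simpa only [hhdef, mul_assoc] using key
  have hsHa : ∀ x, star (h x) * a = a * star (h x) := by
    intro x
    have key := congrArg star (hcomm x)
    simp only [StarMul.star_mul, Matrix.star_eq_conjTranspose, haSkew,
      Matrix.neg_mul, Matrix.mul_neg, neg_inj] at key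
    rw [Matrix.star_eq_conjTranspose]
    exact key.symm
  -- D commutes with a
  have hDcomm : ∀ x, D x * a = a * D x := by
    intro x
    have d1 : HasDerivAt (fun t => h t * a) (h x * 0 + D x * a) x :=
      (hHd x).matmul (hasDerivAt_const x a)
    have d2 : HasDerivAt (fun t => h t * a) (a * D x + 0 * h x) x := by
      have := (hasDerivAt_const x a).matmul (hHd x)
      have e : (fun t => a * h t) = fun t => h t * a := funext fun t => (hcomm t).symm
      rwa [e] at this
    have := d1.unique d2
    simpa using this
  -- skew relation: star (h x) * D x + star (D x) * h x = 0
  have hskew : ∀ x, star (h x) * D x + star (D x) * h x = 0 := by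
    intro x
    have d1 : HasDerivAt (fun t => star (h t) * h t)
        (star (h x) * D x + star (D x) * h x) x := ((hHd x).matstar).matmul (hHd x)
    have d2 : HasDerivAt (fun t => star (h t) * h t) 0 x := by
      have e : (fun t => star (h t) * h t) = fun _ => (1 : Matrix (Fin n) (Fin n) ℂ) :=
        funext fun t => sHH t
      rw [e]; exact hasDerivAt_const x 1
    exact d1.unique d2
  -- formula for star (deriv g x)
  have hsG' : ∀ x, star (deriv g x) = -(star (g x) * deriv g x * star (g x)) := by
    intro x
    have d1 : HasDerivAt (fun t => star (g t) * g t)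
        (star (g x) * deriv g x + star (deriv g x) * g x) x :=
      ((hgd x).matstar).matmul (hgd x)
    have d2 : HasDerivAt (fun t => star (g t) * g t) 0 x := by
      have e : (fun t => star (g t) * g t) = fun _ => (1 : Matrix (Fin n) (Fin n) ℂ) :=
        funext fun t => sGG t
      rw [e]; exact hasDerivAt_const x 1
    have hz := d1.unique d2
    have e1 : star (deriv g x) * g x = -(star (g x) * deriv g x) :=
      by rw [add_comm] at hz; exact eq_neg_of_add_eq_zero_left hz
    have := congrArg (fun m => m * star (g x)) e1
    simpa only [mul_assoc, GsG x, mul_one, Matrix.neg_mul] using this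
  -- the key pointwise vanishing
  have hD0 : ∀ x, D x = 0 := by
    intro x
    set y : Matrix (Fin n) (Fin n) ℂ := star (h x) * D x with hydef
    have hyCent : y ∈ uCent n a := by
      constructor
      · rw [← Matrix.star_eq_conjTranspose]
        have : star y = star (D x) * h x := by
          rw [hydef, StarMul.star_mul, star_star]
        rw [this]
        have := eq_neg_of_add_eq_zero_right (hskew x)
        rw [this, hydef]
      · calc y * a = star (h x) * (D x * a) := by rw [hydef, mul_assoc]
          _ = star (h x) * a * D x := by rw [hDcomm x, ← mul_assoc]
          _ = a * y := by rw [hsHa x, hydef, mul_assoc]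
    -- expand y
    have hyform : y = star (f x) * deriv f x
        - star (h x) * (star (g x) * deriv g x) * h x := by
      rw [hydef, hDdef, hhdef]
      simp only [StarMul.star_mul, star_star, hsG' x]
      have l1 : ∀ m, star (f x) * (g x * (star (g x) * m)) = star (f x) * m := by
        intro m; rw [← mul_assoc (g x), GsG x, one_mul]
      simp only [mul_add, Matrix.mul_neg, Matrix.neg_mul, mul_assoc, l1]
      rw [sub_eq_add_neg]
    have hyPerp : y ∈ uPerp n a := by
      refine ⟨hyCent.1, fun z hz => ?_⟩
      have hwCent : h x * z * star (h x) ∈ uCent n a := by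
        constructor
        · rw [← Matrix.star_eq_conjTranspose]
          simp only [StarMul.star_mul, star_star]
          have hz1 : star z = -z := by
            rw [Matrix.star_eq_conjTranspose]; exact hz.1
          rw [hz1]
          simp only [Matrix.mul_neg, Matrix.neg_mul, mul_assoc]
        · calc h x * z * star (h x) * a = h x * z * (star (h x) * a) := by
                simp only [mul_assoc]
            _ = h x * (z * a) * star (h x) := by rw [hsHa x]; simp only [mul_assoc]
            _ = h x * (a * z) * star (h x) := by rw [hz.2]
            _ = (h x * a) * z * star (h x) := by simp only [mul_assoc]
            _ = a * (h x * z * star (h x)) := by rw [hcomm x]; simp only [mul_assoc]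
      have t1 : -(star (f x) * deriv f x * z).trace = 0 := (hfperp x).2 z hz
      have t2 : -((star (g x) * deriv g x) * (h x * z * star (h x))).trace = 0 :=
        (hgperp x).2 _ hwCent
      have expand : (y * z).trace = (star (f x) * deriv f x * z).trace
          - ((star (g x) * deriv g x) * (h x * z * star (h x))).trace := by
        rw [hyform, Matrix.sub_mul, Matrix.trace_sub]
        congr 1
        calc (star (h x) * (star (g x) * deriv g x) * h x * z).trace
            = (star (h x) * ((star (g x) * deriv g x) * (h x * z))).trace := by
              simp only [mul_assoc]
          _ = (((star (g x) * deriv g x) * (h x * z)) * star (h x)).trace :=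
              Matrix.trace_mul_comm _ _
          _ = ((star (g x) * deriv g x) * (h x * z * star (h x))).trace := by
              simp only [mul_assoc]
      rw [expand]
      rw [neg_sub]
      rw [neg_eq_iff_eq_neg] at t1 t2
      rw [t1, t2]
      ring
    have hy0 : y = 0 := uCent_inter_uPerp_eq_zero hyCent hyPerp
    calc D x = h x * (star (h x) * D x) := by rw [← mul_assoc, HsH x, one_mul]
      _ = 0 := by rw [← hydef, hy0, mul_zero]
  -- h is constant
  have hdiff : Differentiable ℝ h := fun x => (hHd x).differentiableAt
  have hfd0 : ∀ x, fderiv ℝ h x = 0 := by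
    intro x
    have hd0 : HasDerivAt h 0 x := by rw [← hD0 x]; exact hHd x
    have e0 : (ContinuousLinearMap.smulRight (1 : ℝ →L[ℝ] ℝ)
        (0 : Matrix (Fin n) (Fin n) ℂ)) = 0 := by ext t; simp
    have : HasFDerivAt h (0 : ℝ →L[ℝ] Matrix (Fin n) (Fin n) ℂ) x := by
      rw [← e0]; exact hasDerivAt_iff_hasFDerivAt.mp hd0
    exact this.fderiv
  have hconst : ∀ x x' : ℝ, h x = h x' := is_const_of_fderiv_eq_zero hdiff hfd0
  -- limits
  have hstar : Tendsto (fun x => star (g x)) atBot (nhds 1) := by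
    have := ((starCLM n).continuous.tendsto (1 : Matrix (Fin n) (Fin n) ℂ)).comp hglim
    simpa [starCLM, Function.comp_def] using this
  have hmulC : Continuous (fun p : Matrix (Fin n) (Fin n) ℂ × Matrix (Fin n) (Fin n) ℂ =>
      p.1 * p.2) := isBBM_mul.continuous
  have hlim : Tendsto h atBot (nhds 1) := by
    have := (hmulC.tendsto ((1 : Matrix (Fin n) (Fin n) ℂ), (1 : Matrix (Fin n) (Fin n) ℂ))).comp
      (hstar.prodMk_nhds hflim)
    simpa [hhdef, Function.comp_def] using this
  have hlimc : Tendsto h atBot (nhds (h 0)) := by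
    have e : h = fun _ => h 0 := funext fun t => hconst t 0
    rw [e]; exact tendsto_const_nhds
  have h01 : h 0 = 1 := tendsto_nhds_unique hlimc hlim
  have hone : ∀ x, star (g x) * f x = 1 := fun x => (hconst x 0).trans h01
  funext x
  have := congrArg (fun m => g x * m) (hone x)
  simpa only [← mul_assoc, GsG x, one_mul, mul_one] using this
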